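/- Let 0 < λ ≤ 1/2. Let α be a homeomorphism of ℝ and let w be a continuous positive function on ℝ such that w and w⁻¹ = 1/w are bounded, and consider the weighted composition operator T̃_{α,w} on C₀(ℝ) given by T̃_{α,w}(f) = w·(f∘α). If lim_{n→∞} ∏_{k=1}^{n} (w(α^{−k}(n)))⁻¹ = 0, then the set { f ∈ C₀(ℝ) : ‖T̃_{α,w}ⁿ(f)‖_∞ ≥ 1 for all n ∈ ℕ } is not σ-λ-porous in C₀(ℝ). -/

import Mathlib

open scoped ZeroAtInfty
open Filter Finset

/-- For `0 < λ < 1`, a subset `E` of a metric space is *λ-porous at* `x ∈ E` if for each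
`δ > 0` there is `y ∈ B(x; δ) \ {x}` with `B(y; λ·d(x,y)) ∩ E = ∅`. -/
def IsPorousAt {X : Type*} [MetricSpace X] (lam : ℝ) (E : Set X) (x : X) : Prop :=
  ∀ δ > 0, ∃ y ∈ Metric.ball x δ, y ≠ x ∧ Metric.ball y (lam * dist x y) ∩ E = ∅

/-- `E` is *λ-porous* if it is λ-porous at each of its points. -/
def IsPorous {X : Type*} [MetricSpace X] (lam : ℝ) (E : Set X) : Prop :=
  ∀ x ∈ E, IsPorousAt lam E x

/-- `E` is *σ-λ-porous* if it is a countable union of λ-porous subsets. -/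
def IsSigmaPorous {X : Type*} [MetricSpace X] (lam : ℝ) (E : Set X) : Prop :=
  ∃ S : ℕ → Set X, (∀ n, IsPorous lam (S n)) ∧ E = ⋃ n, S n


private lemma round_eq_of_near (m : ℤ) (t : ℝ) (h : |t - m| < 1/2) : round t = m := by
  rw [round_eq, Int.floor_eq_iff]
  rw [abs_lt] at h
  constructor <;> push_cast <;> linarith

private noncomputable def tsh (t : ℝ) : ℝ := max 0 (1 - 4*|t - round t|)

private lemma tsh_nonneg (t : ℝ) : 0 ≤ tsh t := le_max_left _ _
private lemma tsh_le_one (t : ℝ) : tsh t ≤ 1 := by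
  have := abs_nonneg (t - (round t : ℝ))
  unfold tsh
  rw [max_le_iff]; constructor <;> linarith

private lemma tsh_int (n : ℤ) : tsh (n : ℝ) = 1 := by
  unfold tsh
  rw [round_intCast]
  simp

private lemma tsh_lip {s t : ℝ} (h : round s = round t) : |tsh s - tsh t| ≤ 4 * |s - t| := by
  unfold tsh
  rw [h]
  rw [max_comm 0 (1 - 4*|s - (round t:ℝ)|), max_comm 0 (1 - 4*|t - (round t:ℝ)|)]
  have h1 : |max (1 - 4*|s - (round t:ℝ)|) 0 - max (1 - 4*|t - (round t:ℝ)|) 0|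
      ≤ |(1 - 4*|s - (round t:ℝ)|) - (1 - 4*|t - (round t:ℝ)|)| := abs_max_sub_max_le_abs _ _ _
  refine h1.trans ?_
  have h2 : (1 - 4*|s - (round t:ℝ)|) - (1 - 4*|t - (round t:ℝ)|)
      = 4 * (|t - (round t:ℝ)| - |s - (round t:ℝ)|) := by ring
  rw [h2, abs_mul, abs_of_nonneg (by norm_num : (0:ℝ) ≤ 4), abs_sub_comm]
  have h4 := abs_abs_sub_abs_le_abs_sub (s - (round t:ℝ)) (t - (round t:ℝ))
  have h3 : s - (round t:ℝ) - (t - (round t:ℝ)) = s - t := by ring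
  rw [h3] at h4
  nlinarith [abs_nonneg (s-t)]

private lemma tsh_small {s t : ℝ} (h : round s ≠ round t) : tsh s ≤ 4 * |s - t| := by
  rcases le_or_gt (tsh s) 0 with h0 | h0
  · exact h0.trans (by positivity)
  · have hs : |s - (round s : ℝ)| < 1/4 := by
      unfold tsh at h0
      rcases max_cases 0 (1 - 4*|s - (round s:ℝ)|) with ⟨he, _⟩ | ⟨he, _⟩ <;> rw [he] at h0
      · exact absurd h0 (lt_irrefl _)
      · linarith
    have ht : ¬ (|t - (round s : ℝ)| < 1/2) := fun hc => h.symm (round_eq_of_near _ _ hc)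
    push_neg at ht
    have htri : |t - (round s:ℝ)| ≤ |t - s| + |s - (round s:ℝ)| := by
      have := abs_sub_le t s ((round s:ℝ)); linarith [this]
    have hle : tsh s ≤ 1 - 4*|s - (round s:ℝ)| := by
      unfold tsh
      rw [max_le_iff]; constructor <;> nlinarith [abs_nonneg (s - (round s:ℝ))]
    rw [abs_sub_comm s t]
    nlinarith [abs_nonneg (t - s)]

private lemma spike_exists (z : ℕ → ℂ) (h0 : z 0 = 0)
    (hz : Tendsto (fun n => ‖z n‖) atTop (nhds 0)) :
    ∃ g : C₀(ℝ, ℂ), (∀ n : ℕ, g (n : ℝ) = z n) ∧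
      ∀ B : ℝ, (∀ n, ‖z n‖ ≤ B) → ∀ t : ℝ, ‖g t‖ ≤ B := by
  classical
  obtain ⟨N₀, hN₀⟩ := (Metric.tendsto_atTop.mp hz 1 one_pos)
  set B₀ : ℝ := max 1 ((Finset.range (N₀+1)).sup' (by simp) (fun n => ‖z n‖)) with hB₀def
  have hB₀pos : 0 < B₀ := lt_of_lt_of_le one_pos (le_max_left _ _)
  have hB₀ : ∀ n, ‖z n‖ ≤ B₀ := by
    intro n
    rcases le_or_gt n N₀ with h | h
    · exact le_trans (Finset.le_sup' (fun n => ‖z n‖) (by simp [Nat.lt_succ_iff.mpr h]))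
        (le_max_right _ _)
    · have := hN₀ n h.le
      rw [Real.dist_eq, sub_zero, abs_of_nonneg (norm_nonneg _)] at this
      exact le_trans this.le (le_max_left _ _)
  set idx : ℝ → ℕ := fun t => (round t).toNat with hidx
  set G : ℝ → ℂ := fun t => (tsh t : ℂ) * z (idx t) with hG
  have hGnorm : ∀ t, ‖G t‖ = tsh t * ‖z (idx t)‖ := by
    intro t
    rw [hG]
    simp only []
    rw [norm_mul, Complex.norm_real, Real.norm_eq_abs, abs_of_nonneg (tsh_nonneg t)]
  have hGbd : ∀ (B : ℝ), (∀ n, ‖z n‖ ≤ B) → ∀ t, ‖G t‖ ≤ B := by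
    intro B hB t
    rw [hGnorm t]
    have hBnn : 0 ≤ B := le_trans (norm_nonneg _) (hB 0)
    nlinarith [tsh_nonneg t, tsh_le_one t, hB (idx t), norm_nonneg (z (idx t))]
  have hlip : LipschitzWith (Real.toNNReal (8 * B₀)) G := by
    apply LipschitzWith.of_dist_le_mul
    intro s t
    rw [Real.coe_toNNReal _ (by positivity), Real.dist_eq, dist_eq_norm]
    rcases eq_or_ne (round s) (round t) with hr | hr
    · have hid : idx s = idx t := by rw [hidx]; simp only [hr]
      have hsplit : G s - G t = ((tsh s - tsh t : ℝ) : ℂ) * z (idx t) := by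
        rw [hG]
        simp only [hid]
        push_cast
        ring
      rw [hsplit, norm_mul, Complex.norm_real, Real.norm_eq_abs]
      calc |tsh s - tsh t| * ‖z (idx t)‖ ≤ (4 * |s - t|) * B₀ := by
            have h5 := tsh_lip hr
            have h6 := hB₀ (idx t)
            nlinarith [abs_nonneg (tsh s - tsh t), norm_nonneg (z (idx t)), abs_nonneg (s - t)]
        _ ≤ 8 * B₀ * |s - t| := by nlinarith [abs_nonneg (s - t)]
    · have hbs : ‖G s‖ ≤ tsh s * B₀ := by
        rw [hGnorm s]
        nlinarith [tsh_nonneg s, hB₀ (idx s), norm_nonneg (z (idx s))]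
      have hbt : ‖G t‖ ≤ tsh t * B₀ := by
        rw [hGnorm t]
        nlinarith [tsh_nonneg t, hB₀ (idx t), norm_nonneg (z (idx t))]
      have h4s := tsh_small hr
      have h4t := tsh_small hr.symm
      rw [abs_sub_comm t s] at h4t
      calc ‖G s - G t‖ ≤ ‖G s‖ + ‖G t‖ := norm_sub_le _ _
        _ ≤ 8 * B₀ * |s - t| := by nlinarith [tsh_nonneg s, tsh_nonneg t]
  have hcont : Continuous G := hlip.continuous
  have hzero : Tendsto G (Filter.cocompact ℝ) (nhds 0) := by
    rw [cocompact_eq_atBot_atTop, Filter.tendsto_sup]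
    constructor
    · apply Tendsto.congr' _ tendsto_const_nhds
      filter_upwards [Filter.eventually_le_atBot (-1 : ℝ)] with t ht
      have hround : round t ≤ -1 := by
        calc round t = ⌊t + 1/2⌋ := round_eq t
          _ ≤ ⌊(-1 : ℝ) + 1/2⌋ := Int.floor_mono (by linarith)
          _ = -1 := by norm_num
      have hidx0 : idx t = 0 := by
        rw [hidx]
        simp only []
        exact Int.toNat_of_nonpos (by omega)
      rw [hG]
      simp only [hidx0, h0, mul_zero]
    · rw [Metric.tendsto_nhds]
      intro ε hε
      obtain ⟨N, hN⟩ := Metric.tendsto_atTop.mp hz (ε/2) (by linarith)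
      filter_upwards [Filter.eventually_ge_atTop ((N:ℝ) + 1)] with t ht
      have hround : (N : ℤ) ≤ round t := by
        calc (N:ℤ) = ⌊(N:ℝ) + 1/2⌋ := by
              rw [eq_comm, Int.floor_eq_iff]; constructor <;> push_cast <;> linarith
          _ ≤ ⌊t + 1/2⌋ := Int.floor_mono (by linarith)
          _ = round t := (round_eq t).symm
      have hidxN : N ≤ idx t := by
        rw [hidx]
        exact Int.toNat_le_toNat hround |>.trans_eq' (by simp)
      have := hN (idx t) hidxN
      rw [Real.dist_eq, sub_zero, abs_of_nonneg (norm_nonneg _)] at this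
      rw [dist_zero_right]
      calc ‖G t‖ ≤ ‖z (idx t)‖ := by
            rw [hGnorm t]
            nlinarith [tsh_nonneg t, tsh_le_one t, norm_nonneg (z (idx t))]
        _ < ε := by linarith
  refine ⟨⟨⟨G, hcont⟩, hzero⟩, ?_, ?_⟩
  · intro n
    show G (n : ℝ) = z n
    rw [hG]
    simp only []
    have h1 : tsh ((n:ℕ) : ℝ) = 1 := by
      have := tsh_int (n : ℤ); push_cast at this ⊢; exact this
    have h2 : idx ((n:ℕ):ℝ) = n := by
      rw [hidx]
      simp only []
      have : round ((n:ℕ):ℝ) = (n:ℤ) := by push_cast [round_natCast]; rfl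
      rw [this]; simp
    rw [h1, h2, Complex.ofReal_one, one_mul]
  · intro B hB t
    exact hGbd B hB t

private lemma alignC (ζ : ℂ) (r : ℝ) (hr : 0 ≤ r) :
    ∃ σ : ℂ, ‖σ‖ = r ∧ ‖ζ + σ‖ = ‖ζ‖ + r := by
  rcases eq_or_ne ζ 0 with h | h
  · exact ⟨(r : ℂ), by simpa using hr, by simp [h, abs_of_nonneg hr]⟩
  · refine ⟨((r / ‖ζ‖ : ℝ) : ℂ) * ζ, ?_, ?_⟩
    · rw [norm_mul, Complex.norm_real, Real.norm_eq_abs,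
        abs_of_nonneg (by positivity : (0:ℝ) ≤ r / ‖ζ‖)]
      rw [div_mul_cancel₀ _ (norm_ne_zero_iff.mpr h)]
    · have : ζ + ((r / ‖ζ‖ : ℝ) : ℂ) * ζ = ((1 + r / ‖ζ‖ : ℝ) : ℂ) * ζ := by
        push_cast; ring
      rw [this, norm_mul, Complex.norm_real, Real.norm_eq_abs,
        abs_of_nonneg (by positivity : (0:ℝ) ≤ 1 + r / ‖ζ‖)]
      have hz : ‖ζ‖ ≠ 0 := norm_ne_zero_iff.mpr h
      rw [add_mul, one_mul, div_mul_cancel₀ _ hz, add_comm]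

private lemma Tpow_apply (α : ℝ ≃ₜ ℝ) (w : ℝ → ℝ)
    (T : C₀(ℝ, ℂ) →L[ℂ] C₀(ℝ, ℂ))
    (hT : ∀ (f : C₀(ℝ, ℂ)) (t : ℝ), T f t = (w t : ℂ) * f (α t))
    (n : ℕ) (f : C₀(ℝ, ℂ)) (t : ℝ) :
    (T ^ n) f t = ((∏ k ∈ range n, w ((⇑α)^[k] t) : ℝ) : ℂ) * f ((⇑α)^[n] t) := by
  induction n generalizing f t with
  | zero => simp
  | succ n ih =>
    rw [pow_succ', ContinuousLinearMap.mul_apply, hT, ih]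
    rw [Finset.prod_range_succ' (fun k => w ((⇑α)^[k] t)) n]
    have h1 : ∀ k : ℕ, (⇑α)^[k] (α t) = (⇑α)^[k+1] t := by
      intro k; rw [Function.iterate_succ_apply]
    have h2 : (⇑α)^[n] (α t) = (⇑α)^[n+1] t := h1 n
    simp only [h1, h2]
    push_cast
    simp only [Function.iterate_zero_apply]
    ring

private lemma key_witness (α : ℝ ≃ₜ ℝ) (w : ℝ → ℝ) (hw_pos : ∀ t, 0 < w t)
    (T : C₀(ℝ, ℂ) →L[ℂ] C₀(ℝ, ℂ))
    (hT : ∀ (f : C₀(ℝ, ℂ)) (t : ℝ), T f t = (w t : ℂ) * f (α t))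
    (n : ℕ) (f : C₀(ℝ, ℂ)) :
    (∏ k ∈ Icc 1 n, w ((⇑α.symm)^[k] (n : ℝ))) * ‖f ((n : ℕ) : ℝ)‖ ≤ ‖(T ^ n) f‖ := by
  set tn : ℝ := (⇑α.symm)^[n] ((n : ℕ) : ℝ) with htn
  have hLI : Function.LeftInverse (⇑α) (⇑α.symm) := α.apply_symm_apply
  have hiter : ∀ k, k ≤ n → (⇑α)^[k] tn = (⇑α.symm)^[n - k] ((n:ℕ) : ℝ) := by
    intro k
    induction k with
    | zero => intro _; simp [htn]
    | succ k ih =>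
      intro hk
      have hk' : k ≤ n := by omega
      rw [Function.iterate_succ_apply', ih hk']
      rw [show n - k = (n - (k+1)) + 1 by omega, Function.iterate_succ_apply']
      exact hLI _
  have happ : (⇑α)^[n] tn = ((n:ℕ) : ℝ) := by
    rw [hiter n le_rfl]; simp
  have hprod : ∏ k ∈ range n, w ((⇑α)^[k] tn)
      = ∏ k ∈ Icc 1 n, w ((⇑α.symm)^[k] ((n:ℕ) : ℝ)) := by
    have e1 : ∏ k ∈ range n, w ((⇑α)^[k] tn)
        = ∏ k ∈ range n, w ((⇑α.symm)^[n - k] ((n:ℕ):ℝ)) :=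
      Finset.prod_congr rfl (fun k hk => by rw [hiter k (Finset.mem_range.mp hk).le])
    have e2 : ∏ k ∈ range n, w ((⇑α.symm)^[(n - 1 - k) + 1] ((n:ℕ):ℝ))
        = ∏ k ∈ range n, w ((⇑α.symm)^[k + 1] ((n:ℕ):ℝ)) :=
      Finset.prod_range_reflect (fun j => w ((⇑α.symm)^[j + 1] ((n:ℕ):ℝ))) n
    have e3 : ∏ k ∈ range n, w ((⇑α.symm)^[n - k] ((n:ℕ):ℝ))
        = ∏ k ∈ range n, w ((⇑α.symm)^[(n - 1 - k) + 1] ((n:ℕ):ℝ)) :=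
      Finset.prod_congr rfl (fun k hk => by
        rw [show n - k = (n - 1 - k) + 1 by have := Finset.mem_range.mp hk; omega])
    have e4 : ∏ k ∈ Icc 1 n, w ((⇑α.symm)^[k] ((n:ℕ):ℝ))
        = ∏ k ∈ range n, w ((⇑α.symm)^[k + 1] ((n:ℕ):ℝ)) := by
      rw [← Finset.Ico_add_one_right_eq_Icc, Finset.prod_Ico_eq_prod_range]
      have : n + 1 - 1 = n := by omega
      rw [this]
      exact Finset.prod_congr rfl (fun k _ => by rw [Nat.add_comm 1 k])
    rw [e1, e3, e2, ← e4]
  have hnorm : ‖(T ^ n) f tn‖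
      = (∏ k ∈ Icc 1 n, w ((⇑α.symm)^[k] ((n:ℕ):ℝ))) * ‖f ((n:ℕ):ℝ)‖ := by
    rw [Tpow_apply α w T hT n f tn, happ, norm_mul, Complex.norm_real, Real.norm_eq_abs, hprod,
      abs_of_nonneg (Finset.prod_nonneg (fun k _ => (hw_pos _).le))]
  calc (∏ k ∈ Icc 1 n, w ((⇑α.symm)^[k] ((n:ℕ):ℝ))) * ‖f ((n:ℕ):ℝ)‖
      = ‖(T ^ n) f tn‖ := hnorm.symm
    _ ≤ ‖(T ^ n) f‖ :=
        BoundedContinuousFunction.norm_coe_le_norm ((T ^ n) f).toBCF tn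
private def MM (β : ℕ → ℝ) (c : C₀(ℝ,ℂ)) (ρ : ℝ) : Set C₀(ℝ,ℂ) :=
  {x | (∀ n : ℕ, 1 ≤ n → β n ≤ ‖x (n:ℝ)‖) ∧ ‖x - c‖ ≤ ρ}

private lemma norm_tri (a b c : C₀(ℝ,ℂ)) : ‖a - c‖ ≤ ‖a - b‖ + ‖b - c‖ := by
  simpa [dist_eq_norm] using dist_triangle a b c

private lemma eval_le_norm (f : C₀(ℝ,ℂ)) (t : ℝ) : ‖f t‖ ≤ ‖f‖ :=
  BoundedContinuousFunction.norm_coe_le_norm f.toBCF t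

private lemma norm_le_of_eval (f : C₀(ℝ,ℂ)) (B : ℝ) (hB : 0 ≤ B)
    (h : ∀ t, ‖f t‖ ≤ B) : ‖f‖ ≤ B := by
  rw [← ZeroAtInftyContinuousMap.norm_toBCF_eq_norm]
  exact (BoundedContinuousFunction.norm_le hB).mpr h

private lemma pushup_exists (b : C₀(ℝ,ℂ)) (β' : ℕ → ℝ) (cap : ℝ) (hcap : 0 ≤ cap)
    (hraise : ∀ n : ℕ, 1 ≤ n → β' n - ‖b (n:ℝ)‖ ≤ cap)
    (htend : Tendsto β' atTop (nhds 0)) :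
    ∃ c' : C₀(ℝ,ℂ), (∀ n : ℕ, 1 ≤ n → β' n ≤ ‖c' (n:ℝ)‖) ∧ ‖c' - b‖ ≤ cap := by
  classical
  set raise : ℕ → ℝ := fun n => max (β' n - ‖b (n:ℝ)‖) 0 with hraisedef
  have hralign : ∀ n : ℕ, ∃ σ : ℂ, ‖σ‖ = raise n ∧ ‖b (n:ℝ) + σ‖ = ‖b (n:ℝ)‖ + raise n :=
    fun n => alignC _ _ (le_max_right _ _)
  set z : ℕ → ℂ := fun n => if 1 ≤ n then Classical.choose (hralign n) else 0 with hz
  have hz0 : z 0 = 0 := by simp [hz]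
  have hznorm : ∀ n, 1 ≤ n → ‖z n‖ = raise n := by
    intro n hn
    simp only [hz, if_pos hn]
    exact (Classical.choose_spec (hralign n)).1
  have hztend : Tendsto (fun n => ‖z n‖) atTop (nhds 0) := by
    have h1 : Tendsto (fun n => |β' n|) atTop (nhds 0) := by
      simpa using htend.abs
    apply squeeze_zero (fun n => norm_nonneg _) _ h1
    intro n
    rcases Nat.eq_zero_or_pos n with h | h
    · simp [h, hz0]
    · rw [hznorm n h]
      rcases max_cases (β' n - ‖b (n:ℝ)‖) 0 with ⟨he, hge⟩ | ⟨he, _⟩ <;> rw [hraisedef] <;>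
        simp only [he]
      · have h3 := norm_nonneg (b ((n:ℕ):ℝ))
        have h4 := le_abs_self (β' n)
        linarith
      · exact abs_nonneg _
  obtain ⟨g, hgev, hgbd⟩ := spike_exists z hz0 hztend
  refine ⟨b + g, ?_, ?_⟩
  · intro n hn
    have : (b + g) ((n:ℕ):ℝ) = b ((n:ℕ):ℝ) + z n := by
      rw [← hgev n]; rfl
    rw [this]
    have h2 : ‖b ((n:ℕ):ℝ) + z n‖ = ‖b ((n:ℕ):ℝ)‖ + raise n := by
      simp only [hz, if_pos hn]
      exact (Classical.choose_spec (hralign n)).2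
    rw [h2]
    have : β' n - ‖b ((n:ℕ):ℝ)‖ ≤ raise n := le_max_left _ _
    linarith
  · have hzb : ∀ n, ‖z n‖ ≤ cap := by
      intro n
      rcases Nat.eq_zero_or_pos n with h | h
      · simp [h, hz0, hcap]
      · rw [hznorm n h]
        rcases max_cases (β' n - ‖b (n:ℝ)‖) 0 with ⟨he, _⟩ | ⟨he, _⟩ <;> rw [hraisedef] <;>
            simp only [he]
        · exact hraise n h
        · exact hcap
    have : b + g - b = g := by abel
    rw [this]
    exact norm_le_of_eval g cap hcap (hgbd cap hzb)
private lemma step_exists (lam : ℝ) (hlam0 : 0 < lam) (hlam : lam ≤ 1/2)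
    (u : ℕ → ℝ) (A : Set C₀(ℝ,ℂ)) (β : ℕ → ℝ) (c : C₀(ℝ,ℂ)) (ρ : ℝ)
    (hβu : ∀ n, 1 ≤ n → u n ≤ β n) (hβnn : ∀ n, 0 ≤ β n)
    (hβ0 : Tendsto β atTop (nhds 0))
    (hc : ∀ n : ℕ, 1 ≤ n → β n ≤ ‖c (n:ℝ)‖) (hρ : 0 < ρ) :
    ∃ (β' : ℕ → ℝ) (c' : C₀(ℝ,ℂ)) (ρ' : ℝ),
      (∀ n, 1 ≤ n → β n ≤ β' n) ∧
      (∀ n, 0 ≤ β' n) ∧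
      Tendsto β' atTop (nhds 0) ∧
      (∀ n, 1 ≤ n → min ((2/lam - 1) * β n) (4*ρ') ≤ β' n - β n) ∧
      (∀ n : ℕ, 1 ≤ n → β' n ≤ ‖c' (n:ℝ)‖) ∧
      0 < ρ' ∧ ρ' ≤ ρ/2 ∧ ‖c' - c‖ + ρ' ≤ ρ ∧
      ((∀ x, x ∈ MM β' c' ρ' → x ∉ A) ∨
        ((∀ x'' r'', x'' ∈ MM β c ρ → ‖x'' - c‖ < ρ/2 → 0 < r'' → r'' < ρ/2 →
            ∃ a, a ∈ A ∧ a ∈ MM β c ρ ∧ ‖a - x''‖ < r'') ∧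
          (∀ x, x ∈ MM β' c' ρ' → ‖x - c‖ + 4*ρ' < ρ/2))) := by
  classical
  have hlamlt1 : lam < 1 := by linarith
  have h2lam : 0 < 2/lam - 1 := by
    have : 1 < 2/lam := by
      rw [lt_div_iff₀ hlam0]; linarith
    linarith
  -- common construction given a base point and workspace radius
  have common : ∀ (b : C₀(ℝ,ℂ)) (τ : ℝ), 0 < τ →
      (∀ n : ℕ, 1 ≤ n → β n ≤ ‖b (n:ℝ)‖) →
      ∃ (β' : ℕ → ℝ) (c' : C₀(ℝ,ℂ)),
        β' = (fun n => β n + min ((2/lam - 1) * β n) (τ/8)) ∧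
        (∀ n : ℕ, 1 ≤ n → β' n ≤ ‖c' (n:ℝ)‖) ∧ ‖c' - b‖ ≤ τ/8 := by
    intro b τ hτ hb
    set β' : ℕ → ℝ := fun n => β n + min ((2/lam - 1) * β n) (τ/8) with hβ'def
    have hcap : (0:ℝ) ≤ τ/8 := by linarith
    have hraise : ∀ n : ℕ, 1 ≤ n → β' n - ‖b (n:ℝ)‖ ≤ τ/8 := by
      intro n hn
      have h1 := hb n hn
      have h2 : min ((2/lam - 1) * β n) (τ/8) ≤ τ/8 := min_le_right _ _
      simp only [hβ'def]
      linarith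
    have htend' : Tendsto β' atTop (nhds 0) := by
      apply squeeze_zero (fun n => by
        have h1 : (0:ℝ) ≤ min ((2/lam - 1) * β n) (τ/8) :=
          le_min (by nlinarith [hβnn n]) (by linarith)
        have := hβnn n
        simp only [hβ'def]
        linarith)
        (g := fun n => (2/lam) * β n)
      · intro n
        have h1 : min ((2/lam - 1) * β n) (τ/8) ≤ (2/lam - 1) * β n := min_le_left _ _
        simp only [hβ'def]
        nlinarith [hβnn n]
      · simpa using hβ0.const_mul (2/lam)
    obtain ⟨c', hc'⟩ := pushup_exists b β' (τ/8) hcap hraise htend'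
    exact ⟨β', c', rfl, hc'.1, hc'.2⟩
  by_cases h : ∃ x' r', x' ∈ MM β c ρ ∧ ‖x' - c‖ < ρ/2 ∧ 0 < r' ∧ r' < ρ/2 ∧
      ∀ a, a ∈ A → a ∈ MM β c ρ → ¬(‖a - x'‖ < r')
  · -- case (a) : a hole for A inside the inner portion
    obtain ⟨x', r', hx'M, hx'c, hr'0, hr', hav⟩ := h
    obtain ⟨β', c', hβ'def, hc'fl, hc'b⟩ := common x' r' hr'0 hx'M.1
    refine ⟨β', c', r'/32, ?_, ?_, ?_, ?_, hc'fl, by linarith, by linarith, ?_, Or.inl ?_⟩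
    · intro n hn
      simp only [hβ'def]
      have : (0:ℝ) ≤ min ((2/lam - 1) * β n) (r'/8) :=
        le_min (by nlinarith [hβnn n]) (by linarith)
      linarith
    · intro n
      simp only [hβ'def]
      have : (0:ℝ) ≤ min ((2/lam - 1) * β n) (r'/8) :=
        le_min (by nlinarith [hβnn n]) (by linarith)
      have := hβnn n
      linarith
    · apply squeeze_zero (fun n => by
        have : (0:ℝ) ≤ min ((2/lam - 1) * β n) (r'/8) :=
          le_min (by nlinarith [hβnn n]) (by linarith)
        have := hβnn n
        simp only [hβ'def]
        linarith)
        (g := fun n => (2/lam) * β n)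
      · intro n
        have h1 : min ((2/lam - 1) * β n) (r'/8) ≤ (2/lam - 1) * β n := min_le_left _ _
        simp only [hβ'def]
        nlinarith [hβnn n]
      · simpa using hβ0.const_mul (2/lam)
    · intro n hn
      simp only [hβ'def]
      have h4 : 4 * (r'/32) = r'/8 := by ring
      rw [h4]
      linarith
    · -- ‖c' - c‖ + ρ' ≤ ρ
      have h1 : ‖c' - c‖ ≤ ‖c' - x'‖ + ‖x' - c‖ := norm_tri _ _ _
      linarith
    · -- avoidance
      intro x hxM hxA
      have hxfl : ∀ n : ℕ, 1 ≤ n → β n ≤ ‖x (n:ℝ)‖ := by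
        intro n hn
        have h1 := hxM.1 n hn
        simp only [hβ'def] at h1
        have : (0:ℝ) ≤ min ((2/lam - 1) * β n) (r'/8) :=
          le_min (by nlinarith [hβnn n]) (by linarith)
        linarith
      have hxx' : ‖x - x'‖ < r' := by
        have h1 : ‖x - x'‖ ≤ ‖x - c'‖ + ‖c' - x'‖ := norm_tri _ _ _
        have h2 := hxM.2
        linarith
      have hxc : ‖x - c‖ ≤ ρ := by
        have h1 : ‖x - c‖ ≤ ‖x - x'‖ + ‖x' - c‖ := norm_tri _ _ _
        linarith
      exact hav x hxA ⟨hxfl, hxc⟩ hxx'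
  · -- case (b) : density
    push_neg at h
    obtain ⟨β', c', hβ'def, hc'fl, hc'b⟩ := common c (ρ/2) (by linarith) hc
    refine ⟨β', c', ρ/64, ?_, ?_, ?_, ?_, hc'fl, by linarith, by linarith, ?_, Or.inr ⟨?_, ?_⟩⟩
    · intro n hn
      simp only [hβ'def]
      have : (0:ℝ) ≤ min ((2/lam - 1) * β n) (ρ/2/8) :=
        le_min (by nlinarith [hβnn n]) (by linarith)
      linarith
    · intro n
      simp only [hβ'def]
      have : (0:ℝ) ≤ min ((2/lam - 1) * β n) (ρ/2/8) :=
        le_min (by nlinarith [hβnn n]) (by linarith)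
      have := hβnn n
      linarith
    · apply squeeze_zero (fun n => by
        have : (0:ℝ) ≤ min ((2/lam - 1) * β n) (ρ/2/8) :=
          le_min (by nlinarith [hβnn n]) (by linarith)
        have := hβnn n
        simp only [hβ'def]
        linarith)
        (g := fun n => (2/lam) * β n)
      · intro n
        have h1 : min ((2/lam - 1) * β n) (ρ/2/8) ≤ (2/lam - 1) * β n := min_le_left _ _
        simp only [hβ'def]
        nlinarith [hβnn n]
      · simpa using hβ0.const_mul (2/lam)
    · intro n hn
      simp only [hβ'def]
      have h4 : 4 * (ρ/64) = ρ/2/8 := by ring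
      rw [h4]
      linarith
    · have : ρ/2/8 = ρ/16 := by ring
      rw [this] at hc'b
      linarith
    · -- density
      intro x'' r'' hx''M hx''c hr''0 hr''
      obtain ⟨a, haA, haM, hlt⟩ := h x'' r'' hx''M hx''c hr''0 hr''
      exact ⟨a, haA, haM, hlt⟩
    · -- DEEP
      intro x hxM
      have h1 : ‖x - c‖ ≤ ‖x - c'‖ + ‖c' - c‖ := norm_tri _ _ _
      have h2 := hxM.2
      have : ρ/2/8 = ρ/16 := by ring
      rw [this] at hc'b
      linarith

set_option maxHeartbeats 3000000 in
theorem norm_ge_one_set_not_sigma_porous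
    (lam : ℝ) (hlam0 : 0 < lam) (hlam : lam ≤ 1 / 2)
    (α : ℝ ≃ₜ ℝ)
    (w : ℝ → ℝ) (hw_cont : Continuous w) (hw_pos : ∀ t, 0 < w t)
    (hw_bdd : ∃ C, ∀ t, w t ≤ C) (hw_inv_bdd : ∃ C, ∀ t, (w t)⁻¹ ≤ C)
    (T : C₀(ℝ, ℂ) →L[ℂ] C₀(ℝ, ℂ))
    (hT : ∀ (f : C₀(ℝ, ℂ)) (t : ℝ), T f t = (w t : ℂ) * f (α t))
    (hlim : Tendsto
      (fun n : ℕ => ∏ k ∈ Icc 1 n, (w ((⇑α.symm)^[k] (n : ℝ)))⁻¹) atTop (nhds 0)) :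
    ¬ IsSigmaPorous lam
      {f : C₀(ℝ, ℂ) | ∀ n : ℕ, 1 ≤ n → 1 ≤ ‖(T ^ n) f‖} := by
  classical
  rintro ⟨S, hSpor, hSeq⟩
  set P : ℕ → ℝ := fun n => ∏ k ∈ Icc 1 n, w ((⇑α.symm)^[k] (n : ℝ)) with hPdef
  have hPpos : ∀ n, 0 < P n := fun n => Finset.prod_pos (fun k _ => hw_pos _)
  set u : ℕ → ℝ := fun n => (P n)⁻¹ with hudef
  have hupos : ∀ n, 0 < u n := fun n => inv_pos.mpr (hPpos n)
  have hu0 : Tendsto u atTop (nhds 0) := by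
    have : (fun n : ℕ => ∏ k ∈ Icc 1 n, (w ((⇑α.symm)^[k] (n : ℝ)))⁻¹) = u := by
      funext n
      rw [hudef, hPdef]
      exact Finset.prod_inv_distrib (s := Icc 1 n) (f := fun k => w ((⇑α.symm)^[k] (n : ℝ)))
    rwa [this] at hlim
  -- membership criterion
  have memE : ∀ x : C₀(ℝ, ℂ), (∀ n : ℕ, 1 ≤ n → u n ≤ ‖x (n:ℝ)‖) →
      x ∈ {f : C₀(ℝ, ℂ) | ∀ n : ℕ, 1 ≤ n → 1 ≤ ‖(T ^ n) f‖} := by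
    intro x hx n hn
    have h1 : P n * u n ≤ P n * ‖x (n:ℝ)‖ :=
      mul_le_mul_of_nonneg_left (hx n hn) (hPpos n).le
    have h2 : P n * u n = 1 := by
      rw [hudef]
      exact mul_inv_cancel₀ (hPpos n).ne'
    have h3 := key_witness α w hw_pos T hT n x
    have h4 : P n * ‖x ((n:ℕ):ℝ)‖ ≤ ‖(T ^ n) x‖ := h3
    linarith
  -- stages
  set GoodP : ((ℕ → ℝ) × C₀(ℝ,ℂ) × ℝ) → Prop := fun p =>
    (∀ n, 1 ≤ n → u n ≤ p.1 n) ∧ (∀ n, 0 ≤ p.1 n) ∧ Tendsto p.1 atTop (nhds 0) ∧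
    (∀ n : ℕ, 1 ≤ n → p.1 n ≤ ‖p.2.1 (n:ℝ)‖) ∧ 0 < p.2.2 with hGoodP
  set Rel : ℕ → ((ℕ → ℝ) × C₀(ℝ,ℂ) × ℝ) → ((ℕ → ℝ) × C₀(ℝ,ℂ) × ℝ) → Prop := fun i p q =>
    (∀ n, 1 ≤ n → p.1 n ≤ q.1 n) ∧
    (∀ n, 1 ≤ n → min ((2/lam - 1) * p.1 n) (4*q.2.2) ≤ q.1 n - p.1 n) ∧
    (‖q.2.1 - p.2.1‖ + q.2.2 ≤ p.2.2) ∧ (q.2.2 ≤ p.2.2/2) ∧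
    ((∀ x, x ∈ MM q.1 q.2.1 q.2.2 → x ∉ S i) ∨
      ((∀ x'' r'', x'' ∈ MM p.1 p.2.1 p.2.2 → ‖x'' - p.2.1‖ < p.2.2/2 → 0 < r'' →
          r'' < p.2.2/2 → ∃ a, a ∈ S i ∧ a ∈ MM p.1 p.2.1 p.2.2 ∧ ‖a - x''‖ < r'') ∧
        (∀ x, x ∈ MM q.1 q.2.1 q.2.2 → ‖x - p.2.1‖ + 4*q.2.2 < p.2.2/2))) with hRelDef
  have hstep : ∀ (i : ℕ) p, GoodP p → ∃ q, GoodP q ∧ Rel i p q := by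
    rintro i ⟨β, c, ρ⟩ ⟨g1, g2, g3, g4, g5⟩
    obtain ⟨β', c', ρ', o1, o2, o3, o4, o5, o6, o7, o8, o9⟩ :=
      step_exists lam hlam0 hlam u (S i) β c ρ g1 g2 g3 g4 g5
    exact ⟨(β', c', ρ'), ⟨fun n hn => (g1 n hn).trans (o1 n hn), o2, o3, o5, o6⟩,
      ⟨o1, o4, o8, o7, o9⟩⟩
  -- initial stage
  obtain ⟨N₁, hN₁⟩ := Metric.tendsto_atTop.mp hu0 1 one_pos
  set B₁ : ℝ := max 1 ((Finset.range (N₁+1)).sup' (by simp) u) with hB₁def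
  have hB₁ : ∀ n, u n ≤ B₁ := by
    intro n
    rcases le_or_gt n N₁ with h | h
    · exact le_trans (Finset.le_sup' u (by simp [Nat.lt_succ_iff.mpr h])) (le_max_right _ _)
    · have := hN₁ n h.le
      rw [Real.dist_eq, sub_zero, abs_of_nonneg (hupos n).le] at this
      exact le_trans this.le (le_max_left _ _)
  obtain ⟨c0, hc0fl, _⟩ := pushup_exists (0 : C₀(ℝ,ℂ)) u B₁
    (le_trans (hupos 0).le (hB₁ 0))
    (fun n hn => by simpa using (hB₁ n)) hu0
  have hgood0 : GoodP (u, c0, 1) := by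
    refine ⟨fun n _ => le_refl _, fun n => (hupos n).le, hu0, fun n hn => hc0fl n hn, one_pos⟩
  -- the chain
  let chain : ℕ → {p : (ℕ → ℝ) × C₀(ℝ,ℂ) × ℝ // GoodP p} := fun n =>
    Nat.rec ⟨(u, c0, 1), hgood0⟩
      (fun i ih => ⟨(hstep i ih.1 ih.2).choose, (hstep i ih.1 ih.2).choose_spec.1⟩) n
  have hrel : ∀ i, Rel i (chain i).1 (chain (i+1)).1 :=
    fun i => (hstep i (chain i).1 (chain i).2).choose_spec.2
  set βs : ℕ → ℕ → ℝ := fun i => (chain i).1.1 with hβs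
  set cs : ℕ → C₀(ℝ,ℂ) := fun i => (chain i).1.2.1 with hcs
  set ρs : ℕ → ℝ := fun i => (chain i).1.2.2 with hρs
  have hβs0 : βs 0 = u := rfl
  have hβnnA : ∀ i n, 0 ≤ βs i n := fun i => (chain i).2.2.1
  have hβtend : ∀ i, Tendsto (βs i) atTop (nhds 0) := fun i => (chain i).2.2.2.1
  have hcfl : ∀ i (n : ℕ), 1 ≤ n → βs i n ≤ ‖(cs i) (n:ℝ)‖ := fun i => (chain i).2.2.2.2.1
  have hρpos : ∀ i, 0 < ρs i := fun i => (chain i).2.2.2.2.2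
  have hρzero : ρs 0 = 1 := rfl
  have hrelβ : ∀ i, Rel i (βs i, cs i, ρs i) (βs (i+1), cs (i+1), ρs (i+1)) := fun i => hrel i
  clear_value βs cs ρs
  clear hβs hcs hρs hrel
  have hρhalf : ∀ i, ρs (i+1) ≤ ρs i / 2 := fun i => (hrelβ i).2.2.2.1
  have hball : ∀ i, ‖cs (i+1) - cs i‖ + ρs (i+1) ≤ ρs i := fun i => (hrelβ i).2.2.1
  have hβmono : ∀ i n, 1 ≤ n → βs i n ≤ βs (i+1) n := fun i n hn => (hrelβ i).1 n hn
  have hN2 : ∀ i n, 1 ≤ n →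
      min ((2/lam - 1) * βs i n) (4 * ρs (i+1)) ≤ βs (i+1) n - βs i n :=
    fun i n hn => (hrelβ i).2.1 n hn
  have hdisj : ∀ i,
      (∀ x, x ∈ MM (βs (i+1)) (cs (i+1)) (ρs (i+1)) → x ∉ S i) ∨
      ((∀ x'' r'', x'' ∈ MM (βs i) (cs i) (ρs i) → ‖x'' - cs i‖ < ρs i/2 → 0 < r'' →
          r'' < ρs i/2 → ∃ a, a ∈ S i ∧ a ∈ MM (βs i) (cs i) (ρs i) ∧ ‖a - x''‖ < r'') ∧
        (∀ x, x ∈ MM (βs (i+1)) (cs (i+1)) (ρs (i+1)) → ‖x - cs i‖ + 4 * ρs (i+1) < ρs i/2)) :=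
    fun i => (hrelβ i).2.2.2.2
  clear hrelβ
  clear chain
  clear hstep hgood0 hc0fl
  have hβmono' : ∀ i j n, i ≤ j → 1 ≤ n → βs i n ≤ βs j n := by
    intro i j n hij hn
    induction j with
    | zero =>
      have hi0 : i = 0 := by omega
      rw [hi0]
    | succ j ih =>
      rcases Nat.lt_or_ge i (j+1) with h | h
      · exact le_trans (ih (by omega)) (hβmono j n hn)
      · have : i = j + 1 := by omega
        rw [this]
  -- geometric decay and Cauchy
  have hρgeo : ∀ i, ρs i ≤ (1/2)^i := by
    intro i
    induction i with
    | zero =>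
      have : ρs 0 = 1 := hρzero
      rw [this]
      norm_num
    | succ i ih =>
      have h1 := hρhalf i
      have h2 : ((1:ℝ)/2)^(i+1) = (1/2)^i / 2 := by ring
      rw [h2]
      linarith
  have hcauchy : CauchySeq cs := by
    apply cauchySeq_of_le_geometric (1/2) 1 (by norm_num)
    intro i
    rw [dist_eq_norm, norm_sub_rev]
    have h1 := hball i
    have h2 := hρpos (i+1)
    have h3 := hρgeo i
    calc ‖cs (i+1) - cs i‖ ≤ ρs i := by linarith
      _ ≤ 1 * (1/2)^i := by rw [one_mul]; exact h3
  obtain ⟨xs, hxs⟩ := cauchySeq_tendsto_of_complete hcauchy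
  have hnested : ∀ j k, j ≤ k → ‖cs k - cs j‖ + ρs k ≤ ρs j := by
    intro j k hjk
    induction k with
    | zero =>
      have hj0 : j = 0 := by omega
      rw [hj0]
      simp
    | succ k ih =>
      rcases Nat.lt_or_ge j (k+1) with h | h
      · have ih' := ih (by omega)
        have h1 : ‖cs (k+1) - cs j‖ ≤ ‖cs (k+1) - cs k‖ + ‖cs k - cs j‖ := norm_tri _ _ _
        have h2 := hball k
        linarith
      · have : j = k + 1 := by omega
        rw [this]
        simp
  have hxball : ∀ j, ‖xs - cs j‖ ≤ ρs j := by
    intro j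
    have h1 : Tendsto (fun k => ‖cs k - cs j‖) atTop (nhds ‖xs - cs j‖) :=
      ((hxs.sub tendsto_const_nhds).norm)
    apply le_of_tendsto h1
    filter_upwards [Filter.eventually_ge_atTop j] with k hk
    have h2 := hnested j k hk
    have h3 := hρpos k
    linarith
  have heval : ∀ t : ℝ, Tendsto (fun k => (cs k) t) atTop (nhds (xs t)) := by
    intro t
    rw [tendsto_iff_dist_tendsto_zero]
    apply squeeze_zero (fun k => dist_nonneg)
      (g := fun k => ‖cs k - xs‖)
    · intro k
      rw [dist_eq_norm]
      exact eval_le_norm (cs k - xs) t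
    · have h1 : Tendsto (fun k => cs k - xs) atTop (nhds (xs - xs)) :=
        hxs.sub tendsto_const_nhds
      rw [sub_self] at h1
      simpa using h1.norm
  have hxfloors : ∀ j (n : ℕ), 1 ≤ n → βs j n ≤ ‖xs (n:ℝ)‖ := by
    intro j n hn
    apply ge_of_tendsto ((heval ((n:ℕ):ℝ)).norm)
    filter_upwards [Filter.eventually_ge_atTop j] with k hk
    exact le_trans (hβmono' j k n hk hn) (hcfl k n hn)
  have hxE : xs ∈ {f : C₀(ℝ, ℂ) | ∀ n : ℕ, 1 ≤ n → 1 ≤ ‖(T ^ n) f‖} :=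
    memE xs (fun n hn => by rw [← hβs0]; exact hxfloors 0 n hn)
  rw [hSeq] at hxE
  obtain ⟨i₀, hxS⟩ := Set.mem_iUnion.mp hxE
  have hxMsucc : xs ∈ MM (βs (i₀+1)) (cs (i₀+1)) (ρs (i₀+1)) :=
    ⟨fun n hn => hxfloors (i₀+1) n hn, hxball (i₀+1)⟩
  rcases hdisj i₀ with havd | ⟨hdens, hdeep⟩
  · exact havd xs hxMsucc hxS
  · -- porosity at xs
    obtain ⟨y, hyb, hyne, hhole⟩ := hSpor i₀ xs hxS (ρs (i₀+1)) (hρpos (i₀+1))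
    obtain ⟨d, hddef⟩ : ∃ r : ℝ, r = dist xs y := ⟨_, rfl⟩
    have hd0 : 0 < d := by
      rw [hddef]
      exact dist_pos.mpr (fun h => hyne h.symm)
    have hdlt : d < ρs (i₀+1) := by
      rw [hddef, dist_comm]
      exact Metric.mem_ball.mp hyb
    have hβnn : ∀ n, 0 ≤ βs i₀ n := hβnnA i₀
    have hσ : ∀ n : ℕ, ∃ σ : ℂ, ‖σ‖ = βs i₀ n ∧ ‖y (n:ℝ) + σ‖ = ‖y (n:ℝ)‖ + βs i₀ n :=
      fun n => alignC _ _ (hβnn n)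
    obtain ⟨cond, hconddef⟩ : ∃ c : ℕ → Prop, c = fun n => 1 ≤ n ∧ βs (i₀+1) n - βs i₀ n < d :=
      ⟨_, rfl⟩
    obtain ⟨z, hzdef⟩ : ∃ z : ℕ → ℂ, z = fun n => if cond n then (hσ n).choose else 0 :=
      ⟨_, rfl⟩
    have hz0 : z 0 = 0 := by
      rw [hzdef]
      simp only [hconddef]
      rw [if_neg]
      rintro ⟨h1, -⟩
      omega
    have hznorm : ∀ n, cond n → ‖z n‖ = βs i₀ n := by
      intro n hc
      rw [hzdef]
      simp only [if_pos hc]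
      exact ((hσ n).choose_spec).1
    have hztend : Tendsto (fun n => ‖z n‖) atTop (nhds 0) := by
      apply squeeze_zero (fun n => norm_nonneg _) (g := fun n => |βs i₀ n|)
      · intro n
        by_cases hc : cond n
        · rw [hznorm n hc]; exact le_abs_self _
        · rw [hzdef]; simp only [if_neg hc]; simp
      · simpa using (hβtend i₀).abs
    obtain ⟨g, hgev, hgbd⟩ := spike_exists z hz0 hztend
    obtain ⟨v, hvdef⟩ : ∃ v : C₀(ℝ,ℂ), v = y + g := ⟨_, rfl⟩
    have hfreshbd : ∀ n, ‖z n‖ ≤ 2/3 * (lam * d) := by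
      intro n
      by_cases hc : cond n
      · rw [hznorm n hc]
        rw [hconddef] at hc
        obtain ⟨hc1, hc2⟩ := hc
        have h1 := hN2 i₀ n hc1
        have h2 : min ((2/lam - 1) * βs i₀ n) (4 * ρs (i₀+1)) < d := lt_of_le_of_lt h1 hc2
        have h3 : (2/lam - 1) * βs i₀ n < d := by
          rcases min_lt_iff.mp h2 with h | h
          · exact h
          · exfalso
            have := hρpos (i₀+1)
            linarith
        have h5 : (2 - lam) * βs i₀ n < lam * d := by
          have h6 := mul_lt_mul_of_pos_left h3 hlam0
          have h7 : lam * ((2/lam - 1) * βs i₀ n) = (2 - lam) * βs i₀ n := by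
            have h8 : lam * (2/lam) = 2 := by
              rw [mul_comm]
              exact div_mul_cancel₀ 2 hlam0.ne'
            calc lam * ((2/lam - 1) * βs i₀ n) = (lam * (2/lam) - lam) * βs i₀ n := by ring
              _ = (2 - lam) * βs i₀ n := by rw [h8]
          rwa [h7] at h6
        nlinarith [hβnn n, hd0, hlam0,
          mul_nonneg (by linarith : (0:ℝ) ≤ 1/2 - lam) (hβnn n)]
      · rw [hzdef]
        simp only [if_neg hc]
        simp
        positivity
    have hvy : ‖v - y‖ ≤ 2/3 * (lam * d) := by
      have h1 : v - y = g := by rw [hvdef]; abel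
      rw [h1]
      exact norm_le_of_eval g _ (by positivity) (hgbd _ hfreshbd)
    have hvylt : ‖v - y‖ < lam * d := by
      have h9 : (0:ℝ) < lam * d := by positivity
      linarith
    have hvfloor : ∀ n : ℕ, 1 ≤ n → βs i₀ n ≤ ‖v (n:ℝ)‖ := by
      intro n hn
      have hev : v ((n:ℕ):ℝ) = y ((n:ℕ):ℝ) + z n := by
        rw [hvdef]
        have : (y + g) ((n:ℕ):ℝ) = y ((n:ℕ):ℝ) + g ((n:ℕ):ℝ) := rfl
        rw [this, hgev n]
      rw [hev]
      by_cases hc : cond n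
      · rw [hzdef]
        simp only [if_pos hc]
        rw [((hσ n).choose_spec).2]
        have := norm_nonneg (y ((n:ℕ):ℝ))
        linarith
      · have hgap : d ≤ βs (i₀+1) n - βs i₀ n := by
          by_contra hcon
          push_neg at hcon
          apply hc
          rw [hconddef]
          exact ⟨hn, hcon⟩
        have hz : z n = 0 := by rw [hzdef]; simp only [if_neg hc]
        rw [hz, add_zero]
        have h1 : ‖xs ((n:ℕ):ℝ) - y ((n:ℕ):ℝ)‖ ≤ d := by
          have : xs ((n:ℕ):ℝ) - y ((n:ℕ):ℝ) = (xs - y) ((n:ℕ):ℝ) := rfl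
          rw [this, hddef, dist_eq_norm]
          exact eval_le_norm (xs - y) _
        have h2 : ‖xs ((n:ℕ):ℝ)‖ - ‖y ((n:ℕ):ℝ)‖ ≤ d :=
          le_trans (norm_sub_norm_le _ _) h1
        have h3 := hxfloors (i₀+1) n hn
        linarith
    have hvxs : ‖v - xs‖ ≤ 2 * d := by
      have h1 : ‖v - xs‖ ≤ ‖v - y‖ + ‖y - xs‖ := norm_tri _ _ _
      have h2 : ‖y - xs‖ = d := by rw [hddef, dist_comm, dist_eq_norm]
      have h3 : lam * d ≤ (1/2) * d := mul_le_mul_of_nonneg_right hlam hd0.le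
      linarith
    have hdeepx := hdeep xs hxMsucc
    have hvc : ‖v - cs i₀‖ < ρs i₀ / 2 := by
      have h1 : ‖v - cs i₀‖ ≤ ‖v - xs‖ + ‖xs - cs i₀‖ := norm_tri _ _ _
      have h2 := hρpos (i₀+1)
      linarith [hdlt]
    have hvM : v ∈ MM (βs i₀) (cs i₀) (ρs i₀) := by
      refine ⟨hvfloor, ?_⟩
      have := hρpos i₀
      linarith
    obtain ⟨r'', hr''def⟩ : ∃ r : ℝ, r = lam * d - ‖v - y‖ := ⟨_, rfl⟩
    have hr''0 : 0 < r'' := by rw [hr''def]; linarith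
    have hr''lt : r'' < ρs i₀ / 2 := by
      have h1 : r'' ≤ lam * d := by
        have := norm_nonneg (v - y)
        rw [hr''def]; linarith
      have h2 : lam * d ≤ (1/2) * d := mul_le_mul_of_nonneg_right hlam hd0.le
      have h3 := hρhalf i₀
      have h4 := hρpos (i₀+1)
      have h5 := hρpos i₀
      linarith [hdlt]
    obtain ⟨a, haS, haM, halt⟩ := hdens v r'' hvM hvc hr''0 hr''lt
    have haball : a ∈ Metric.ball y (lam * dist xs y) := by
      rw [Metric.mem_ball]
      have h1 : dist a y ≤ ‖a - v‖ + ‖v - y‖ := by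
        rw [dist_eq_norm]
        exact norm_tri _ _ _
      rw [← hddef]
      have : ‖a - v‖ < r'' := halt
      rw [hr''def] at this
      linarith
    exact Set.eq_empty_iff_forall_notMem.mp hhole a ⟨haball, haS⟩
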